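/- Under the heat-matrix assumptions with zero sources, for every index i there exist nonnegative weights w_1, …, w_N with Σ_j w_j = 1 such that CN_1(h)_i = Σ_j w_j u⁰_j; i.e., each component of the one-stage constant-neighbour update is a convex combination of the initial values. -/

import Mathlib

open Finset NormedSpace Asymptotics

/-- `aCoef M Q v i = Σ_{j≠i} M_ij v_j + Q_i`. -/
noncomputable def aCoef {N : ℕ} (M : Matrix (Fin N) (Fin N) ℝ) (Q : Fin N → ℝ)
    (v : Fin N → ℝ) (i : Fin N) : ℝ :=
  (∑ j ∈ Finset.univ.erase i, M i j * v j) + Q i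

/-- The constant-neighbour step `F_h`. -/
noncomputable def cnStep {N : ℕ} (M : Matrix (Fin N) (Fin N) ℝ) (Q u0 : Fin N → ℝ)
    (h : ℝ) (v : Fin N → ℝ) : Fin N → ℝ :=
  fun i => u0 i * Real.exp (M i i * h)
    + (aCoef M Q v i / (-(M i i))) * (1 - Real.exp (M i i * h))

/-- The `k`-stage constant-neighbour approximation `CN_k(h) = F_h^[k] u⁰`. -/
noncomputable def CN {N : ℕ} (M : Matrix (Fin N) (Fin N) ℝ) (Q u0 : Fin N → ℝ)
    (k : ℕ) (h : ℝ) : Fin N → ℝ :=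
  (cnStep M Q u0 h)^[k] u0

/-- The effective slope `s_i(v) = (a_i(v) − a_i(u⁰))/h`. -/
noncomputable def sCoef {N : ℕ} (M : Matrix (Fin N) (Fin N) ℝ) (Q u0 : Fin N → ℝ)
    (h : ℝ) (v : Fin N → ℝ) (i : Fin N) : ℝ :=
  (aCoef M Q v i - aCoef M Q u0 i) / h

/-- The linear-neighbour step `G_h`, with `τ_i = −1/M_ii`. -/
noncomputable def lnStep {N : ℕ} (M : Matrix (Fin N) (Fin N) ℝ) (Q u0 : Fin N → ℝ)
    (h : ℝ) (v : Fin N → ℝ) : Fin N → ℝ :=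
  fun i =>
    u0 i * Real.exp (M i i * h)
      + (aCoef M Q u0 i * (-(M i i)⁻¹) - sCoef M Q u0 h v i * (-(M i i)⁻¹) ^ 2)
          * (1 - Real.exp (M i i * h))
      + sCoef M Q u0 h v i * (-(M i i)⁻¹) * h

/-- The `k`-stage linear-neighbour approximation `LN_k(h) = G_h^[k−1] (CN_1(h))`, `k ≥ 2`. -/
noncomputable def LN {N : ℕ} (M : Matrix (Fin N) (Fin N) ℝ) (Q u0 : Fin N → ℝ)
    (k : ℕ) (h : ℝ) : Fin N → ℝ :=
  (lnStep M Q u0 h)^[k - 1] (cnStep M Q u0 h u0)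

/-- The exact solution `u_ex(h) = e^{hM} u⁰ + ∫₀^h e^{(h−s)M} Q ds`. -/
noncomputable def uex {N : ℕ} (M : Matrix (Fin N) (Fin N) ℝ) (Q u0 : Fin N → ℝ)
    (h : ℝ) : Fin N → ℝ :=
  (exp (h • M)).mulVec u0 + ∫ s in (0:ℝ)..h, (exp ((h - s) • M)).mulVec Q

/-- Appendix B, point A: under the heat-matrix assumptions with zero sources, each
component of the one-stage constant-neighbour update `CN_1(h)` is a convex
combination of the initial values. -/
theorem cn1_convex_combination {N : ℕ} (hN : 1 ≤ N) (M : Matrix (Fin N) (Fin N) ℝ)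
    (hoff : ∀ i j, j ≠ i → 0 ≤ M i j)
    (hrow : ∀ i, ∑ j, M i j = 0)
    (hdiag : ∀ i, M i i < 0)
    (u0 : Fin N → ℝ) (h : ℝ) (hh : 0 < h) (i : Fin N) :
    ∃ w : Fin N → ℝ, (∀ j, 0 ≤ w j) ∧ (∑ j, w j) = 1 ∧
      CN M (0 : Fin N → ℝ) u0 1 h i = ∑ j, w j * u0 j := by
  set e : ℝ := Real.exp (M i i * h) with he
  have hdneg := hdiag i
  have hdpos : 0 < -(M i i) := by linarith
  have he_pos : 0 < e := Real.exp_pos _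
  have he_le : e ≤ 1 := by
    rw [he]
    have : M i i * h ≤ 0 := by nlinarith
    exact Real.exp_le_one_iff.mpr this
  have hsum_erase : ∑ j ∈ Finset.univ.erase i, M i j = -(M i i) := by
    have := Finset.add_sum_erase Finset.univ (M i) (Finset.mem_univ i)
    have h2 := hrow i
    linarith
  refine ⟨fun j => if j = i then e else M i j / (-(M i i)) * (1 - e), ?_, ?_, ?_⟩
  · intro j
    by_cases hj : j = i
    · simp [hj, he_pos.le]
    · simp only [hj, if_false]
      have h1 := hoff i j hj
      have h2 : (0:ℝ) ≤ 1 - e := by linarith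
      exact mul_nonneg (div_nonneg h1 hdpos.le) h2
  · rw [← Finset.add_sum_erase Finset.univ _ (Finset.mem_univ i)]
    have : ∑ j ∈ Finset.univ.erase i,
        (if j = i then e else M i j / (-(M i i)) * (1 - e))
        = ∑ j ∈ Finset.univ.erase i, M i j / (-(M i i)) * (1 - e) := by
      apply Finset.sum_congr rfl
      intro j hj
      simp [Finset.ne_of_mem_erase hj]
    rw [this, if_pos rfl, ← Finset.sum_mul, ← Finset.sum_div, hsum_erase,
      div_self hdpos.ne']
    ring
  · rw [← Finset.add_sum_erase Finset.univ _ (Finset.mem_univ i)]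
    have hrest : ∑ j ∈ Finset.univ.erase i,
        (if j = i then e else M i j / (-(M i i)) * (1 - e)) * u0 j
        = (∑ j ∈ Finset.univ.erase i, M i j * u0 j) / (-(M i i)) * (1 - e) := by
      rw [Finset.sum_div, Finset.sum_mul]
      apply Finset.sum_congr rfl
      intro j hj
      simp only [Finset.ne_of_mem_erase hj, if_false]
      ring
    rw [hrest]
    simp only [CN, Function.iterate_one, cnStep, aCoef, Pi.zero_apply, add_zero,
      eq_self_iff_true, if_true]
    ring
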